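/- Substitution of a renamed parameter in an object term corresponds to the bijection action on its interpretation: if W is an object term of type X of the σ-free syntax, x ∈ X, a is a parameter of W with x ∈ FV(a), and τ : FV(a)\{x} ∪ {x'} → FV(a) renames x to x', then [W[a^τ/a]] = [W]^σ, where σ : X\{x} ∪ {x'} → X renames x to x'. Moreover, for any arrow term φ with source W, [φ[a^τ/a]] = [φ]^σ. -/

import Mathlib

namespace CatCyclicOperad

/-- A categorified entries-only cyclic operad (Definition 2.1 of the paper), with strict
equivariance.  Operations are indexed by finite sets of entry names drawn from a fixed type
`V` of variables; `Hom` is presented heterogeneously (in the intended models morphisms only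
exist between operations with the same, possibly differently presented, set of entries).
The fields record: the categories `C(X)`, the partial composition bifunctors `ₓ∘ᵧ`,
the commutator `γ`, the associator `β` (with its inverse), their naturality, and the
coherence conditions (β-pentagon), (βγ-hexagon), (βγ-decagon) and (γ-involution). -/
structure CECO (V : Type) [DecidableEq V] where
  Ob : Finset V → Type
  Hom : {S T : Finset V} → Ob S → Ob T → Type
  vid : {S : Finset V} → (f : Ob S) → Hom f f
  vcomp : {S T U : Finset V} → {f : Ob S} → {g : Ob T} → {h : Ob U} →
    Hom g h → Hom f g → Hom f h
  vcomp_vid : ∀ {S T : Finset V} {f : Ob S} {g : Ob T} (φ : Hom f g), vcomp φ (vid f) = φ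
  vid_vcomp : ∀ {S T : Finset V} {f : Ob S} {g : Ob T} (φ : Hom f g), vcomp (vid g) φ = φ
  vcomp_assoc : ∀ {S₁ S₂ S₃ S₄ : Finset V} {f₁ : Ob S₁} {f₂ : Ob S₂} {f₃ : Ob S₃} {f₄ : Ob S₄}
    (φ : Hom f₃ f₄) (ψ : Hom f₂ f₃) (χ : Hom f₁ f₂),
    vcomp (vcomp φ ψ) χ = vcomp φ (vcomp ψ χ)
  /-- The partial composition `f ₓ∘ᵧ g` on operations. -/
  pc : {X Y : Finset V} → (x y : V) → x ∈ X → y ∈ Y →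
    Disjoint (X.erase x) (Y.erase y) → Ob X → Ob Y → Ob (X.erase x ∪ Y.erase y)
  /-- The partial composition on morphisms (bifunctoriality data). -/
  pcH : {X X' Y Y' : Finset V} → (x y : V) →
    (hx : x ∈ X) → (hx' : x ∈ X') → (hy : y ∈ Y) → (hy' : y ∈ Y') →
    (hd : Disjoint (X.erase x) (Y.erase y)) → (hd' : Disjoint (X'.erase x) (Y'.erase y)) →
    {f : Ob X} → {f' : Ob X'} → {g : Ob Y} → {g' : Ob Y'} →
    Hom f f' → Hom g g' → Hom (pc x y hx hy hd f g) (pc x y hx' hy' hd' f' g')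
  pcH_vid : ∀ {X Y : Finset V} (x y : V) (hx : x ∈ X) (hy : y ∈ Y)
    (hd : Disjoint (X.erase x) (Y.erase y)) (f : Ob X) (g : Ob Y),
    pcH x y hx hx hy hy hd hd (vid f) (vid g) = vid (pc x y hx hy hd f g)
  pcH_vcomp : ∀ {X X' X'' Y Y' Y'' : Finset V} (x y : V)
    (hx : x ∈ X) (hx' : x ∈ X') (hx'' : x ∈ X'') (hy : y ∈ Y) (hy' : y ∈ Y') (hy'' : y ∈ Y'')
    (hd : Disjoint (X.erase x) (Y.erase y)) (hd' : Disjoint (X'.erase x) (Y'.erase y))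
    (hd'' : Disjoint (X''.erase x) (Y''.erase y))
    {f : Ob X} {f' : Ob X'} {f'' : Ob X''} {g : Ob Y} {g' : Ob Y'} {g'' : Ob Y''}
    (φ' : Hom f' f'') (φ : Hom f f') (ψ' : Hom g' g'') (ψ : Hom g g'),
    pcH x y hx hx'' hy hy'' hd hd'' (vcomp φ' φ) (vcomp ψ' ψ)
      = vcomp (pcH x y hx' hx'' hy' hy'' hd' hd'' φ' ψ') (pcH x y hx hx' hy hy' hd hd' φ ψ)
  /-- The commutator isomorphism `γ`. -/
  gam : {X Y : Finset V} → (x y : V) → (hx : x ∈ X) → (hy : y ∈ Y) →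
    (hd : Disjoint (X.erase x) (Y.erase y)) → (f : Ob X) → (g : Ob Y) →
    Hom (pc x y hx hy hd f g) (pc y x hy hx hd.symm g f)
  gam_natural : ∀ {X X' Y Y' : Finset V} (x y : V)
    (hx : x ∈ X) (hx' : x ∈ X') (hy : y ∈ Y) (hy' : y ∈ Y')
    (hd : Disjoint (X.erase x) (Y.erase y)) (hd' : Disjoint (X'.erase x) (Y'.erase y))
    {f : Ob X} {f' : Ob X'} {g : Ob Y} {g' : Ob Y'} (φ : Hom f f') (ψ : Hom g g'),
    vcomp (gam x y hx' hy' hd' f' g') (pcH x y hx hx' hy hy' hd hd' φ ψ)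
      = vcomp (pcH y x hy hy' hx hx' hd.symm hd'.symm ψ φ) (gam x y hx hy hd f g)
  /-- (γ-involution). -/
  gam_involution : ∀ {X Y : Finset V} (x y : V) (hx : x ∈ X) (hy : y ∈ Y)
    (hd : Disjoint (X.erase x) (Y.erase y)) (f : Ob X) (g : Ob Y),
    vcomp (gam y x hy hx hd.symm g f) (gam x y hx hy hd f g) = vid (pc x y hx hy hd f g)
  /-- The associator isomorphism `β`. -/
  bet : {X Y Z : Finset V} → (x xb y yb : V) →
    (hx : x ∈ X) → (hxb : xb ∈ Y) → (hy : y ∈ Y) → (hyb : yb ∈ Z) →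
    (d1 : Disjoint (X.erase x) (Y.erase xb)) →
    (hyU : y ∈ X.erase x ∪ Y.erase xb) →
    (d2 : Disjoint ((X.erase x ∪ Y.erase xb).erase y) (Z.erase yb)) →
    (d3 : Disjoint (Y.erase y) (Z.erase yb)) →
    (hxbU : xb ∈ Y.erase y ∪ Z.erase yb) →
    (d4 : Disjoint (X.erase x) ((Y.erase y ∪ Z.erase yb).erase xb)) →
    (f : Ob X) → (g : Ob Y) → (h : Ob Z) →
    Hom (pc y yb hyU hyb d2 (pc x xb hx hxb d1 f g) h)
        (pc x xb hx hxbU d4 f (pc y yb hy hyb d3 g h))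
  /-- The inverse of the associator. -/
  betInv : {X Y Z : Finset V} → (x xb y yb : V) →
    (hx : x ∈ X) → (hxb : xb ∈ Y) → (hy : y ∈ Y) → (hyb : yb ∈ Z) →
    (d1 : Disjoint (X.erase x) (Y.erase xb)) →
    (hyU : y ∈ X.erase x ∪ Y.erase xb) →
    (d2 : Disjoint ((X.erase x ∪ Y.erase xb).erase y) (Z.erase yb)) →
    (d3 : Disjoint (Y.erase y) (Z.erase yb)) →
    (hxbU : xb ∈ Y.erase y ∪ Z.erase yb) →
    (d4 : Disjoint (X.erase x) ((Y.erase y ∪ Z.erase yb).erase xb)) →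
    (f : Ob X) → (g : Ob Y) → (h : Ob Z) →
    Hom (pc x xb hx hxbU d4 f (pc y yb hy hyb d3 g h))
        (pc y yb hyU hyb d2 (pc x xb hx hxb d1 f g) h)
  betInv_bet : ∀ {X Y Z : Finset V} (x xb y yb : V)
    (hx : x ∈ X) (hxb : xb ∈ Y) (hy : y ∈ Y) (hyb : yb ∈ Z)
    (d1 : Disjoint (X.erase x) (Y.erase xb))
    (hyU : y ∈ X.erase x ∪ Y.erase xb)
    (d2 : Disjoint ((X.erase x ∪ Y.erase xb).erase y) (Z.erase yb))
    (d3 : Disjoint (Y.erase y) (Z.erase yb))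
    (hxbU : xb ∈ Y.erase y ∪ Z.erase yb)
    (d4 : Disjoint (X.erase x) ((Y.erase y ∪ Z.erase yb).erase xb))
    (f : Ob X) (g : Ob Y) (h : Ob Z),
    vcomp (betInv x xb y yb hx hxb hy hyb d1 hyU d2 d3 hxbU d4 f g h)
          (bet x xb y yb hx hxb hy hyb d1 hyU d2 d3 hxbU d4 f g h)
      = vid (pc y yb hyU hyb d2 (pc x xb hx hxb d1 f g) h)
  bet_betInv : ∀ {X Y Z : Finset V} (x xb y yb : V)
    (hx : x ∈ X) (hxb : xb ∈ Y) (hy : y ∈ Y) (hyb : yb ∈ Z)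
    (d1 : Disjoint (X.erase x) (Y.erase xb))
    (hyU : y ∈ X.erase x ∪ Y.erase xb)
    (d2 : Disjoint ((X.erase x ∪ Y.erase xb).erase y) (Z.erase yb))
    (d3 : Disjoint (Y.erase y) (Z.erase yb))
    (hxbU : xb ∈ Y.erase y ∪ Z.erase yb)
    (d4 : Disjoint (X.erase x) ((Y.erase y ∪ Z.erase yb).erase xb))
    (f : Ob X) (g : Ob Y) (h : Ob Z),
    vcomp (bet x xb y yb hx hxb hy hyb d1 hyU d2 d3 hxbU d4 f g h)
          (betInv x xb y yb hx hxb hy hyb d1 hyU d2 d3 hxbU d4 f g h)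
      = vid (pc x xb hx hxbU d4 f (pc y yb hy hyb d3 g h))
  bet_natural : ∀ {X X' Y Y' Z Z' : Finset V} (x xb y yb : V)
    (hx : x ∈ X) (hx' : x ∈ X') (hxb : xb ∈ Y) (hxb' : xb ∈ Y')
    (hy : y ∈ Y) (hy' : y ∈ Y') (hyb : yb ∈ Z) (hyb' : yb ∈ Z')
    (d1 : Disjoint (X.erase x) (Y.erase xb)) (d1' : Disjoint (X'.erase x) (Y'.erase xb))
    (hyU : y ∈ X.erase x ∪ Y.erase xb) (hyU' : y ∈ X'.erase x ∪ Y'.erase xb)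
    (d2 : Disjoint ((X.erase x ∪ Y.erase xb).erase y) (Z.erase yb))
    (d2' : Disjoint ((X'.erase x ∪ Y'.erase xb).erase y) (Z'.erase yb))
    (d3 : Disjoint (Y.erase y) (Z.erase yb)) (d3' : Disjoint (Y'.erase y) (Z'.erase yb))
    (hxbU : xb ∈ Y.erase y ∪ Z.erase yb) (hxbU' : xb ∈ Y'.erase y ∪ Z'.erase yb)
    (d4 : Disjoint (X.erase x) ((Y.erase y ∪ Z.erase yb).erase xb))
    (d4' : Disjoint (X'.erase x) ((Y'.erase y ∪ Z'.erase yb).erase xb))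
    {f : Ob X} {f' : Ob X'} {g : Ob Y} {g' : Ob Y'} {h : Ob Z} {h' : Ob Z'}
    (φ : Hom f f') (ψ : Hom g g') (χ : Hom h h'),
    vcomp (bet x xb y yb hx' hxb' hy' hyb' d1' hyU' d2' d3' hxbU' d4' f' g' h')
          (pcH y yb hyU hyU' hyb hyb' d2 d2' (pcH x xb hx hx' hxb hxb' d1 d1' φ ψ) χ)
    = vcomp (pcH x xb hx hx' hxbU hxbU' d4 d4' φ (pcH y yb hy hy' hyb hyb' d3 d3' ψ χ))
            (bet x xb y yb hx hxb hy hyb d1 hyU d2 d3 hxbU d4 f g h)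
  /-- (β-pentagon). -/
  pentagon : ∀ {X Y Z W : Finset V} (x xb y yb z zb : V)
    (hx : x ∈ X) (hxb : xb ∈ Y) (hy : y ∈ Y) (hyb : yb ∈ Z) (hz : z ∈ Z) (hzb : zb ∈ W)
    (dfg : Disjoint (X.erase x) (Y.erase xb))
    (dgh : Disjoint (Y.erase y) (Z.erase yb))
    (dhk : Disjoint (Z.erase z) (W.erase zb))
    (hyA : y ∈ X.erase x ∪ Y.erase xb)
    (dP2 : Disjoint ((X.erase x ∪ Y.erase xb).erase y) (Z.erase yb))
    (hzB : z ∈ (X.erase x ∪ Y.erase xb).erase y ∪ Z.erase yb)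
    (dL : Disjoint (((X.erase x ∪ Y.erase xb).erase y ∪ Z.erase yb).erase z) (W.erase zb))
    (hxbC : xb ∈ Y.erase y ∪ Z.erase yb)
    (dQ2 : Disjoint (X.erase x) ((Y.erase y ∪ Z.erase yb).erase xb))
    (hzC : z ∈ Y.erase y ∪ Z.erase yb)
    (dN : Disjoint ((Y.erase y ∪ Z.erase yb).erase z) (W.erase zb))
    (hybE : yb ∈ Z.erase z ∪ W.erase zb)
    (dR2 : Disjoint (Y.erase y) ((Z.erase z ∪ W.erase zb).erase yb))
    (hxbF : xb ∈ Y.erase y ∪ (Z.erase z ∪ W.erase zb).erase yb)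
    (dF : Disjoint (X.erase x) ((Y.erase y ∪ (Z.erase z ∪ W.erase zb).erase yb).erase xb))
    (hzD : z ∈ X.erase x ∪ (Y.erase y ∪ Z.erase yb).erase xb)
    (dM : Disjoint ((X.erase x ∪ (Y.erase y ∪ Z.erase yb).erase xb).erase z) (W.erase zb))
    (hxbCW : xb ∈ (Y.erase y ∪ Z.erase yb).erase z ∪ W.erase zb)
    (dG : Disjoint (X.erase x) (((Y.erase y ∪ Z.erase yb).erase z ∪ W.erase zb).erase xb))
    (dO : Disjoint ((X.erase x ∪ Y.erase xb).erase y) ((Z.erase z ∪ W.erase zb).erase yb))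
    (f : Ob X) (g : Ob Y) (h : Ob Z) (k : Ob W),
    vcomp (pcH x xb hx hx hxbCW hxbF dG dF (vid f)
            (bet y yb z zb hy hyb hz hzb dgh hzC dN dhk hybE dR2 g h k))
      (vcomp (bet x xb z zb hx hxbC hzC hzb dQ2 hzD dM dN hxbCW dG
                f (pc y yb hy hyb dgh g h) k)
        (pcH z zb hzB hzD hzb hzb dL dM
          (bet x xb y yb hx hxb hy hyb dfg hyA dP2 dgh hxbC dQ2 f g h) (vid k)))
    = vcomp (bet x xb y yb hx hxb hy hybE dfg hyA dO dR2 hxbF dF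
              f g (pc z zb hz hzb dhk h k))
        (bet y yb z zb hyA hyb hz hzb dP2 hzB dL dhk hybE dO
          (pc x xb hx hxb dfg f g) h k)
  /-- (βγ-hexagon). -/
  hexagon : ∀ {X Y Z : Finset V} (x xb y yb : V)
    (hx : x ∈ X) (hxb : xb ∈ Y) (hy : y ∈ Y) (hyb : yb ∈ Z)
    (dfg : Disjoint (X.erase x) (Y.erase xb))
    (dgh : Disjoint (Y.erase y) (Z.erase yb))
    (hyA : y ∈ X.erase x ∪ Y.erase xb)
    (dP2 : Disjoint ((X.erase x ∪ Y.erase xb).erase y) (Z.erase yb))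
    (hxbC : xb ∈ Y.erase y ∪ Z.erase yb)
    (dQ2 : Disjoint (X.erase x) ((Y.erase y ∪ Z.erase yb).erase xb))
    (hyA' : y ∈ Y.erase xb ∪ X.erase x)
    (dP2' : Disjoint ((Y.erase xb ∪ X.erase x).erase y) (Z.erase yb))
    (hxbZY : xb ∈ Z.erase yb ∪ Y.erase y)
    (d6 : Disjoint ((Z.erase yb ∪ Y.erase y).erase xb) (X.erase x))
    (f : Ob X) (g : Ob Y) (h : Ob Z),
    vcomp (bet yb y xb x hyb hy hxb hx dgh.symm hxbZY d6 dfg.symm hyA' dP2'.symm h g f)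
      (vcomp (pcH xb x hxbC hxbZY hx hx dQ2.symm d6 (gam y yb hy hyb dgh g h) (vid f))
        (vcomp (gam x xb hx hxbC dQ2 f (pc y yb hy hyb dgh g h))
          (bet x xb y yb hx hxb hy hyb dfg hyA dP2 dgh hxbC dQ2 f g h)))
    = vcomp (gam y yb hyA' hyb dP2' (pc xb x hxb hx dfg.symm g f) h)
        (pcH y yb hyA hyA' hyb hyb dP2 dP2' (gam x xb hx hxb dfg f g) (vid h))
  /-- (βγ-decagon). -/
  decagon : ∀ {X Y Z W : Finset V} (x xb y yb z zb : V)
    (hx : x ∈ X) (hxb : xb ∈ Y) (hy : y ∈ Y) (hyb : yb ∈ Z) (hz : z ∈ Y) (hzb : zb ∈ W)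
    (dfg : Disjoint (X.erase x) (Y.erase xb))
    (dgh : Disjoint (Y.erase y) (Z.erase yb))
    (dgk : Disjoint (Y.erase z) (W.erase zb))
    (hyA : y ∈ X.erase x ∪ Y.erase xb)
    (dAh : Disjoint ((X.erase x ∪ Y.erase xb).erase y) (Z.erase yb))
    (hzB : z ∈ (X.erase x ∪ Y.erase xb).erase y ∪ Z.erase yb)
    (dBk : Disjoint (((X.erase x ∪ Y.erase xb).erase y ∪ Z.erase yb).erase z) (W.erase zb))
    (hzB2 : z ∈ Z.erase yb ∪ (X.erase x ∪ Y.erase xb).erase y)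
    (dB2k : Disjoint ((Z.erase yb ∪ (X.erase x ∪ Y.erase xb).erase y).erase z) (W.erase zb))
    (hzA : z ∈ X.erase x ∪ Y.erase xb)
    (dAk : Disjoint ((X.erase x ∪ Y.erase xb).erase z) (W.erase zb))
    (hyC1 : y ∈ (X.erase x ∪ Y.erase xb).erase z ∪ W.erase zb)
    (dhC : Disjoint (Z.erase yb) (((X.erase x ∪ Y.erase xb).erase z ∪ W.erase zb).erase y))
    (hxbE : xb ∈ Y.erase z ∪ W.erase zb)
    (dfE : Disjoint (X.erase x) ((Y.erase z ∪ W.erase zb).erase xb))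
    (hyF1 : y ∈ X.erase x ∪ (Y.erase z ∪ W.erase zb).erase xb)
    (dF1h : Disjoint ((X.erase x ∪ (Y.erase z ∪ W.erase zb).erase xb).erase y) (Z.erase yb))
    (hyE : y ∈ Y.erase z ∪ W.erase zb)
    (dEh : Disjoint ((Y.erase z ∪ W.erase zb).erase y) (Z.erase yb))
    (hxbG1 : xb ∈ (Y.erase z ∪ W.erase zb).erase y ∪ Z.erase yb)
    (dfG1 : Disjoint (X.erase x) (((Y.erase z ∪ W.erase zb).erase y ∪ Z.erase yb).erase xb))
    (hxbC : xb ∈ Y.erase y ∪ Z.erase yb)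
    (dfC : Disjoint (X.erase x) ((Y.erase y ∪ Z.erase yb).erase xb))
    (hzD : z ∈ X.erase x ∪ (Y.erase y ∪ Z.erase yb).erase xb)
    (dDk : Disjoint ((X.erase x ∪ (Y.erase y ∪ Z.erase yb).erase xb).erase z) (W.erase zb))
    (hzC : z ∈ Y.erase y ∪ Z.erase yb)
    (dCk : Disjoint ((Y.erase y ∪ Z.erase yb).erase z) (W.erase zb))
    (hxbH1 : xb ∈ (Y.erase y ∪ Z.erase yb).erase z ∪ W.erase zb)
    (dfH1 : Disjoint (X.erase x) (((Y.erase y ∪ Z.erase yb).erase z ∪ W.erase zb).erase xb))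
    (hzC2 : z ∈ Z.erase yb ∪ Y.erase y)
    (dC2k : Disjoint ((Z.erase yb ∪ Y.erase y).erase z) (W.erase zb))
    (hxbH2 : xb ∈ (Z.erase yb ∪ Y.erase y).erase z ∪ W.erase zb)
    (dfH2 : Disjoint (X.erase x) (((Z.erase yb ∪ Y.erase y).erase z ∪ W.erase zb).erase xb))
    (dhE : Disjoint (Z.erase yb) ((Y.erase z ∪ W.erase zb).erase y))
    (hxbG2 : xb ∈ Z.erase yb ∪ (Y.erase z ∪ W.erase zb).erase y)
    (dfG2 : Disjoint (X.erase x) ((Z.erase yb ∪ (Y.erase z ∪ W.erase zb).erase y).erase xb))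
    (f : Ob X) (g : Ob Y) (h : Ob Z) (k : Ob W),
    vcomp (bet x xb y yb hx hxbE hyE hyb dfE hyF1 dF1h dEh hxbG1 dfG1
            f (pc z zb hz hzb dgk g k) h)
      (vcomp (pcH y yb hyC1 hyF1 hyb hyb dhC.symm dF1h
                (bet x xb z zb hx hxb hz hzb dfg hzA dAk dgk hxbE dfE f g k) (vid h))
        (vcomp (gam yb y hyb hyC1 dhC h (pc z zb hzA hzb dAk (pc x xb hx hxb dfg f g) k))
          (vcomp (bet yb y z zb hyb hyA hzA hzb dAh.symm hzB2 dB2k dAk hyC1 dhC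
                    h (pc x xb hx hxb dfg f g) k)
            (pcH z zb hzB hzB2 hzb hzb dBk dB2k
              (gam y yb hyA hyb dAh (pc x xb hx hxb dfg f g) h) (vid k)))))
    = vcomp (pcH x xb hx hx hxbG2 hxbG1 dfG2 dfG1 (vid f)
              (gam yb y hyb hyE dhE h (pc z zb hz hzb dgk g k)))
        (vcomp (pcH x xb hx hx hxbH2 hxbG2 dfH2 dfG2 (vid f)
                  (bet yb y z zb hyb hy hz hzb dgh.symm hzC2 dC2k dgk hyE dhE h g k))
          (vcomp (pcH x xb hx hx hxbH1 hxbH2 dfH1 dfH2 (vid f)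
                    (pcH z zb hzC hzC2 hzb hzb dCk dC2k (gam y yb hy hyb dgh g h) (vid k)))
            (vcomp (bet x xb z zb hx hxbC hzC hzb dfC hzD dDk dCk hxbH1 dfH1
                      f (pc y yb hy hyb dgh g h) k)
              (pcH z zb hzB hzD hzb hzb dBk dDk
                (bet x xb y yb hx hxb hy hyb dfg hyA dAh dgh hxbC dfC f g h) (vid k)))))

/-- A categorified entries-only cyclic operad together with its strict action of
bijections (renamings) `σ : V ≃ V`: `act σ : C(X) → C(σ⁻¹[X])` on objects and morphisms,
functorially, satisfying the strict equivariance axiom (EQ) on objects as well as the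
coherence conditions (βσ), (γσ) and (EQ-mor) relating the action to `β`, `γ` and the
partial composition of morphisms.  Index-set identifications are recorded by quantified
equalities `e` and transports. -/
structure CECOE (V : Type) [DecidableEq V] extends CECO V where
  act : {X : Finset V} → (σ : V ≃ V) → Ob X → Ob (X.image ⇑σ.symm)
  actH : {S T : Finset V} → (σ : V ≃ V) → {f : Ob S} → {g : Ob T} →
    Hom f g → Hom (act σ f) (act σ g)
  actH_vid : ∀ {X : Finset V} (σ : V ≃ V) (f : Ob X), actH σ (vid f) = vid (act σ f)
  actH_vcomp : ∀ {S T U : Finset V} (σ : V ≃ V) {f : Ob S} {g : Ob T} {h : Ob U}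
    (φ : Hom g h) (ψ : Hom f g), actH σ (vcomp φ ψ) = vcomp (actH σ φ) (actH σ ψ)
  act_one : ∀ {X : Finset V} (e : X.image ⇑(1 : V ≃ V).symm = X) (f : Ob X),
    e ▸ act 1 f = f
  act_mul : ∀ {X : Finset V} (σ τ : V ≃ V)
    (e : (X.image ⇑σ.symm).image ⇑τ.symm = X.image ⇑(τ.trans σ).symm) (f : Ob X),
    e ▸ act τ (act σ f) = act (τ.trans σ) f
  /-- the strict equivariance axiom (EQ) -/
  act_pc : ∀ {X Y : Finset V} (x y : V) (hx : x ∈ X) (hy : y ∈ Y)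
    (hd : Disjoint (X.erase x) (Y.erase y)) (σ σ₁ σ₂ : V ≃ V)
    (_ : ∀ v ∈ X.erase x, σ₁.symm v = σ.symm v)
    (_ : ∀ v ∈ Y.erase y, σ₂.symm v = σ.symm v)
    (hx' : σ₁.symm x ∈ X.image ⇑σ₁.symm) (hy' : σ₂.symm y ∈ Y.image ⇑σ₂.symm)
    (hd' : Disjoint ((X.image ⇑σ₁.symm).erase (σ₁.symm x))
      ((Y.image ⇑σ₂.symm).erase (σ₂.symm y)))
    (e : (X.erase x ∪ Y.erase y).image ⇑σ.symm
        = (X.image ⇑σ₁.symm).erase (σ₁.symm x) ∪ (Y.image ⇑σ₂.symm).erase (σ₂.symm y))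
    (f : Ob X) (g : Ob Y),
    e ▸ act σ (pc x y hx hy hd f g)
      = pc (σ₁.symm x) (σ₂.symm y) hx' hy' hd' (act σ₁ f) (act σ₂ g)
  /-- the coherence condition (βσ) -/
  act_bet : ∀ {X Y Z : Finset V} (x xb y yb : V)
    (hx : x ∈ X) (hxb : xb ∈ Y) (hy : y ∈ Y) (hyb : yb ∈ Z)
    (d1 : Disjoint (X.erase x) (Y.erase xb))
    (hyU : y ∈ X.erase x ∪ Y.erase xb)
    (d2 : Disjoint ((X.erase x ∪ Y.erase xb).erase y) (Z.erase yb))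
    (d3 : Disjoint (Y.erase y) (Z.erase yb))
    (hxbU : xb ∈ Y.erase y ∪ Z.erase yb)
    (d4 : Disjoint (X.erase x) ((Y.erase y ∪ Z.erase yb).erase xb))
    (σ σ₁ σ₂ σ₃ : V ≃ V)
    (_ : ∀ v ∈ X.erase x, σ₁.symm v = σ.symm v)
    (_ : ∀ v ∈ (Y.erase xb).erase y, σ₂.symm v = σ.symm v)
    (_ : ∀ v ∈ Z.erase yb, σ₃.symm v = σ.symm v)
    (hx' : σ₁.symm x ∈ X.image ⇑σ₁.symm) (hxb' : σ₂.symm xb ∈ Y.image ⇑σ₂.symm)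
    (hy' : σ₂.symm y ∈ Y.image ⇑σ₂.symm) (hyb' : σ₃.symm yb ∈ Z.image ⇑σ₃.symm)
    (d1' : Disjoint ((X.image ⇑σ₁.symm).erase (σ₁.symm x))
      ((Y.image ⇑σ₂.symm).erase (σ₂.symm xb)))
    (hyU' : σ₂.symm y ∈ (X.image ⇑σ₁.symm).erase (σ₁.symm x)
      ∪ (Y.image ⇑σ₂.symm).erase (σ₂.symm xb))
    (d2' : Disjoint (((X.image ⇑σ₁.symm).erase (σ₁.symm x)
      ∪ (Y.image ⇑σ₂.symm).erase (σ₂.symm xb)).erase (σ₂.symm y))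
      ((Z.image ⇑σ₃.symm).erase (σ₃.symm yb)))
    (d3' : Disjoint ((Y.image ⇑σ₂.symm).erase (σ₂.symm y))
      ((Z.image ⇑σ₃.symm).erase (σ₃.symm yb)))
    (hxbU' : σ₂.symm xb ∈ (Y.image ⇑σ₂.symm).erase (σ₂.symm y)
      ∪ (Z.image ⇑σ₃.symm).erase (σ₃.symm yb))
    (d4' : Disjoint ((X.image ⇑σ₁.symm).erase (σ₁.symm x))
      (((Y.image ⇑σ₂.symm).erase (σ₂.symm y)
        ∪ (Z.image ⇑σ₃.symm).erase (σ₃.symm yb)).erase (σ₂.symm xb)))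
    (f : Ob X) (g : Ob Y) (h : Ob Z),
    HEq (actH σ (bet x xb y yb hx hxb hy hyb d1 hyU d2 d3 hxbU d4 f g h))
      (bet (σ₁.symm x) (σ₂.symm xb) (σ₂.symm y) (σ₃.symm yb) hx' hxb' hy' hyb'
        d1' hyU' d2' d3' hxbU' d4' (act σ₁ f) (act σ₂ g) (act σ₃ h))
  /-- the coherence condition (γσ) -/
  act_gam : ∀ {X Y : Finset V} (x y : V) (hx : x ∈ X) (hy : y ∈ Y)
    (hd : Disjoint (X.erase x) (Y.erase y)) (σ σ₁ σ₂ : V ≃ V)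
    (_ : ∀ v ∈ X.erase x, σ₁.symm v = σ.symm v)
    (_ : ∀ v ∈ Y.erase y, σ₂.symm v = σ.symm v)
    (hx' : σ₁.symm x ∈ X.image ⇑σ₁.symm) (hy' : σ₂.symm y ∈ Y.image ⇑σ₂.symm)
    (hd' : Disjoint ((X.image ⇑σ₁.symm).erase (σ₁.symm x))
      ((Y.image ⇑σ₂.symm).erase (σ₂.symm y)))
    (f : Ob X) (g : Ob Y),
    HEq (actH σ (gam x y hx hy hd f g))
      (gam (σ₁.symm x) (σ₂.symm y) hx' hy' hd' (act σ₁ f) (act σ₂ g))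
  /-- the coherence condition (EQ-mor) -/
  act_pcH : ∀ {X X' Y Y' : Finset V} (x y : V)
    (hx : x ∈ X) (hx2 : x ∈ X') (hy : y ∈ Y) (hy2 : y ∈ Y')
    (hd : Disjoint (X.erase x) (Y.erase y)) (hd2 : Disjoint (X'.erase x) (Y'.erase y))
    (σ σ₁ σ₂ : V ≃ V)
    (_ : ∀ v ∈ X.erase x, σ₁.symm v = σ.symm v)
    (_ : ∀ v ∈ Y.erase y, σ₂.symm v = σ.symm v)
    (hx' : σ₁.symm x ∈ X.image ⇑σ₁.symm) (hx2' : σ₁.symm x ∈ X'.image ⇑σ₁.symm)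
    (hy' : σ₂.symm y ∈ Y.image ⇑σ₂.symm) (hy2' : σ₂.symm y ∈ Y'.image ⇑σ₂.symm)
    (hd' : Disjoint ((X.image ⇑σ₁.symm).erase (σ₁.symm x))
      ((Y.image ⇑σ₂.symm).erase (σ₂.symm y)))
    (hd2' : Disjoint ((X'.image ⇑σ₁.symm).erase (σ₁.symm x))
      ((Y'.image ⇑σ₂.symm).erase (σ₂.symm y)))
    {f : Ob X} {f' : Ob X'} {g : Ob Y} {g' : Ob Y'}
    (φ : Hom f f') (ψ : Hom g g'),
    HEq (actH σ (pcH x y hx hx2 hy hy2 hd hd2 φ ψ))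
      (pcH (σ₁.symm x) (σ₂.symm y) hx' hx2' hy' hy2' hd' hd2'
        (actH σ₁ φ) (actH σ₂ ψ))

end CatCyclicOperad

namespace CatCyclicOperad

variable {V : Type} [DecidableEq V]

/-- Object terms of the σ-free syntax `Free̲_C`, generated from parameters (operations of
`C`) by the formal partial compositions `ₓ□ᵧ`. -/
inductive OT (C : CECOE V) : Finset V → Type
  | par {X : Finset V} : C.Ob X → OT C X
  | pc {X Y : Finset V} (x y : V) (hx : x ∈ X) (hy : y ∈ Y)
      (hd : Disjoint (X.erase x) (Y.erase y)) :
      OT C X → OT C Y → OT C (X.erase x ∪ Y.erase y)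

/-- The interpretation `[−]_X` of σ-free object terms in `C`. -/
def interpO (C : CECOE V) : {X : Finset V} → OT C X → C.Ob X
  | _, .par a => a
  | _, .pc x y hx hy hd W₁ W₂ => C.pc x y hx hy hd (interpO C W₁) (interpO C W₂)

/-- `Ren C x x' W W'` : the object term `W'` is obtained from `W` by the substitution
`W[a^τ/a]`, where `a` is the (unique) parameter of `W` containing the free variable `x`
and `τ` renames `x` to the fresh variable `x'`. -/
inductive Ren (C : CECOE V) (x x' : V) : {X X' : Finset V} → OT C X → OT C X' → Prop
  | par {X : Finset V} (a : C.Ob X) (hx : x ∈ X) (hx' : x' ∉ X)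
      (e : X.image ⇑(Equiv.swap x x').symm = insert x' (X.erase x)) :
      Ren C x x' (.par a) (.par (e ▸ C.act (Equiv.swap x x') a))
  | pcL {X X' Y : Finset V} {W₁ : OT C X} {W₁' : OT C X'} {W₂ : OT C Y} (z w : V)
      (hz : z ∈ X) (hz' : z ∈ X') (hw : w ∈ Y)
      (hd : Disjoint (X.erase z) (Y.erase w)) (hd' : Disjoint (X'.erase z) (Y.erase w)) :
      Ren C x x' W₁ W₁' →
      Ren C x x' (.pc z w hz hw hd W₁ W₂) (.pc z w hz' hw hd' W₁' W₂)
  | pcR {X Y Y' : Finset V} {W₁ : OT C X} {W₂ : OT C Y} {W₂' : OT C Y'} (z w : V)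
      (hz : z ∈ X) (hw : w ∈ Y) (hw' : w ∈ Y')
      (hd : Disjoint (X.erase z) (Y.erase w)) (hd' : Disjoint (X.erase z) (Y'.erase w)) :
      Ren C x x' W₂ W₂' →
      Ren C x x' (.pc z w hz hw hd W₁ W₂) (.pc z w hz hw' hd' W₁ W₂')

/-- The α-equivalence `≡` on σ-free object terms: the smallest congruence with respect to
the formal partial compositions generated by the simultaneous renaming of the pair of
composed variables to fresh ones inside the parameters containing them. -/
inductive AEq (C : CECOE V) : {X X' : Finset V} → OT C X → OT C X' → Prop
  | refl {X : Finset V} (W : OT C X) : AEq C W W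
  | symm {X X' : Finset V} {W : OT C X} {W' : OT C X'} : AEq C W W' → AEq C W' W
  | trans {X X' X'' : Finset V} {W : OT C X} {W' : OT C X'} {W'' : OT C X''} :
      AEq C W W' → AEq C W' W'' → AEq C W W''
  | congr {X X' Y Y' : Finset V} {W₁ : OT C X} {W₁' : OT C X'} {W₂ : OT C Y}
      {W₂' : OT C Y'} (z w : V) (hz : z ∈ X) (hz' : z ∈ X') (hw : w ∈ Y) (hw' : w ∈ Y')
      (hd : Disjoint (X.erase z) (Y.erase w)) (hd' : Disjoint (X'.erase z) (Y'.erase w)) :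
      AEq C W₁ W₁' → AEq C W₂ W₂' →
      AEq C (.pc z w hz hw hd W₁ W₂) (.pc z w hz' hw' hd' W₁' W₂')
  | rename {X X' Y Y' : Finset V} {W₁ : OT C X} {W₁' : OT C X'} {W₂ : OT C Y}
      {W₂' : OT C Y'} (z w z' w' : V) (hz : z ∈ X) (hz' : z' ∈ X') (hw : w ∈ Y)
      (hw' : w' ∈ Y')
      (hd : Disjoint (X.erase z) (Y.erase w)) (hd' : Disjoint (X'.erase z') (Y'.erase w')) :
      Ren C z z' W₁ W₁' → Ren C w w' W₂ W₂' →
      z' ∉ X.erase z ∪ Y.erase w → w' ∉ X.erase z ∪ Y.erase w → z' ≠ w' →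
      AEq C (.pc z w hz hw hd W₁ W₂) (.pc z' w' hz' hw' hd' W₁' W₂')

/-- Arrow terms of the σ-free syntax `Free̲_C`: identities, formal composition, parallel
compositions, and the components of `β`, `β⁻¹` and `γ`. -/
inductive AT (C : CECOE V) : {X X' : Finset V} → OT C X → OT C X' → Type
  | id {X : Finset V} (W : OT C X) : AT C W W
  | comp {X₁ X₂ X₃ : Finset V} {U : OT C X₁} {Vm : OT C X₂} {W : OT C X₃} :
      AT C Vm W → AT C U Vm → AT C U W
  | pcH {X X' Y Y' : Finset V} (x y : V) (hx : x ∈ X) (hx' : x ∈ X') (hy : y ∈ Y)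
      (hy' : y ∈ Y') (hd : Disjoint (X.erase x) (Y.erase y))
      (hd' : Disjoint (X'.erase x) (Y'.erase y))
      {f : OT C X} {f' : OT C X'} {g : OT C Y} {g' : OT C Y'} :
      AT C f f' → AT C g g' → AT C (.pc x y hx hy hd f g) (.pc x y hx' hy' hd' f' g')
  | gam {X Y : Finset V} (x y : V) (hx : x ∈ X) (hy : y ∈ Y)
      (hd : Disjoint (X.erase x) (Y.erase y)) (f : OT C X) (g : OT C Y) :
      AT C (.pc x y hx hy hd f g) (.pc y x hy hx hd.symm g f)
  | bet {X Y Z : Finset V} (x xb y yb : V)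
      (hx : x ∈ X) (hxb : xb ∈ Y) (hy : y ∈ Y) (hyb : yb ∈ Z)
      (d1 : Disjoint (X.erase x) (Y.erase xb))
      (hyU : y ∈ X.erase x ∪ Y.erase xb)
      (d2 : Disjoint ((X.erase x ∪ Y.erase xb).erase y) (Z.erase yb))
      (d3 : Disjoint (Y.erase y) (Z.erase yb))
      (hxbU : xb ∈ Y.erase y ∪ Z.erase yb)
      (d4 : Disjoint (X.erase x) ((Y.erase y ∪ Z.erase yb).erase xb))
      (f : OT C X) (g : OT C Y) (h : OT C Z) :
      AT C (.pc y yb hyU hyb d2 (.pc x xb hx hxb d1 f g) h)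
           (.pc x xb hx hxbU d4 f (.pc y yb hy hyb d3 g h))
  | betInv {X Y Z : Finset V} (x xb y yb : V)
      (hx : x ∈ X) (hxb : xb ∈ Y) (hy : y ∈ Y) (hyb : yb ∈ Z)
      (d1 : Disjoint (X.erase x) (Y.erase xb))
      (hyU : y ∈ X.erase x ∪ Y.erase xb)
      (d2 : Disjoint ((X.erase x ∪ Y.erase xb).erase y) (Z.erase yb))
      (d3 : Disjoint (Y.erase y) (Z.erase yb))
      (hxbU : xb ∈ Y.erase y ∪ Z.erase yb)
      (d4 : Disjoint (X.erase x) ((Y.erase y ∪ Z.erase yb).erase xb))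
      (f : OT C X) (g : OT C Y) (h : OT C Z) :
      AT C (.pc x xb hx hxbU d4 f (.pc y yb hy hyb d3 g h))
           (.pc y yb hyU hyb d2 (.pc x xb hx hxb d1 f g) h)

/-- The interpretation of σ-free arrow terms in `C`. -/
def interpA (C : CECOE V) : {X X' : Finset V} → {U : OT C X} → {W : OT C X'} →
    AT C U W → C.Hom (interpO C U) (interpO C W)
  | _, _, _, _, .id W => C.vid (interpO C W)
  | _, _, _, _, .comp φ ψ => C.vcomp (interpA C φ) (interpA C ψ)
  | _, _, _, _, .pcH x y hx hx' hy hy' hd hd' φ ψ =>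
      C.pcH x y hx hx' hy hy' hd hd' (interpA C φ) (interpA C ψ)
  | _, _, _, _, .gam x y hx hy hd f g =>
      C.gam x y hx hy hd (interpO C f) (interpO C g)
  | _, _, _, _, .bet x xb y yb hx hxb hy hyb d1 hyU d2 d3 hxbU d4 f g h =>
      C.bet x xb y yb hx hxb hy hyb d1 hyU d2 d3 hxbU d4
        (interpO C f) (interpO C g) (interpO C h)
  | _, _, _, _, .betInv x xb y yb hx hxb hy hyb d1 hyU d2 d3 hxbU d4 f g h =>
      C.betInv x xb y yb hx hxb hy hyb d1 hyU d2 d3 hxbU d4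
        (interpO C f) (interpO C g) (interpO C h)

/-- Renaming of a variable in an index. -/
def rn (x x' v : V) : V := if v = x then x' else v

/-- The substitution `φ[a^τ/a]` on arrow terms, presented as a relation: the indices of
`φ` are modified as dictated by the substitution on its source (Example 2.12 of the
paper). -/
inductive RenA (C : CECOE V) (x x' : V) :
    {X₁ X₂ X₃ X₄ : Finset V} → {U : OT C X₁} → {W : OT C X₂} → {U' : OT C X₃} →
    {W' : OT C X₄} → AT C U W → AT C U' W' → Prop
  | id {X X' : Finset V} {W : OT C X} {W' : OT C X'} :
      Ren C x x' W W' → RenA C x x' (AT.id W) (AT.id W')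
  | comp {Xa Xb Xc Xd Xe Xf : Finset V} {U : OT C Xa} {Vm : OT C Xb} {W : OT C Xc}
      {U' : OT C Xd} {Vm' : OT C Xe} {W' : OT C Xf}
      {φ₂ : AT C Vm W} {φ₁ : AT C U Vm} {φ₂' : AT C Vm' W'} {φ₁' : AT C U' Vm'} :
      RenA C x x' φ₂ φ₂' → RenA C x x' φ₁ φ₁' →
      RenA C x x' (AT.comp φ₂ φ₁) (AT.comp φ₂' φ₁')
  | pcH {X X' Y Y' X₂ X₂' Y₂ Y₂' : Finset V} (z w : V)
      {f : OT C X} {f' : OT C X'} {g : OT C Y} {g' : OT C Y'}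
      {f₂ : OT C X₂} {f₂' : OT C X₂'} {g₂ : OT C Y₂} {g₂' : OT C Y₂'}
      (hz : z ∈ X) (hz' : z ∈ X') (hw : w ∈ Y) (hw' : w ∈ Y')
      (hd : Disjoint (X.erase z) (Y.erase w)) (hd' : Disjoint (X'.erase z) (Y'.erase w))
      (hz₂ : rn x x' z ∈ X₂) (hz₂' : rn x x' z ∈ X₂')
      (hw₂ : rn x x' w ∈ Y₂) (hw₂' : rn x x' w ∈ Y₂')
      (hd₂ : Disjoint (X₂.erase (rn x x' z)) (Y₂.erase (rn x x' w)))
      (hd₂' : Disjoint (X₂'.erase (rn x x' z)) (Y₂'.erase (rn x x' w)))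
      {φ : AT C f f'} {φ' : AT C f₂ f₂'} {ψ : AT C g g'} {ψ' : AT C g₂ g₂'} :
      RenA C x x' φ φ' → RenA C x x' ψ ψ' →
      RenA C x x' (AT.pcH z w hz hz' hw hw' hd hd' φ ψ)
        (AT.pcH (rn x x' z) (rn x x' w) hz₂ hz₂' hw₂ hw₂' hd₂ hd₂' φ' ψ')
  | gam {X Y X₂ Y₂ : Finset V} (z w : V) {f : OT C X} {g : OT C Y} {f' : OT C X₂}
      {g' : OT C Y₂} (hz : z ∈ X) (hw : w ∈ Y)
      (hd : Disjoint (X.erase z) (Y.erase w))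
      (hz₂ : rn x x' z ∈ X₂) (hw₂ : rn x x' w ∈ Y₂)
      (hd₂ : Disjoint (X₂.erase (rn x x' z)) (Y₂.erase (rn x x' w))) :
      Ren C x x' f f' → Ren C x x' g g' →
      RenA C x x' (AT.gam z w hz hw hd f g)
        (AT.gam (rn x x' z) (rn x x' w) hz₂ hw₂ hd₂ f' g')
  | bet {X Y Z X₂ Y₂ Z₂ : Finset V} (z zb w wb : V)
      {f : OT C X} {g : OT C Y} {h : OT C Z}
      {f' : OT C X₂} {g' : OT C Y₂} {h' : OT C Z₂}
      (hz : z ∈ X) (hzb : zb ∈ Y) (hw : w ∈ Y) (hwb : wb ∈ Z)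
      (d1 : Disjoint (X.erase z) (Y.erase zb))
      (hwU : w ∈ X.erase z ∪ Y.erase zb)
      (d2 : Disjoint ((X.erase z ∪ Y.erase zb).erase w) (Z.erase wb))
      (d3 : Disjoint (Y.erase w) (Z.erase wb))
      (hzbU : zb ∈ Y.erase w ∪ Z.erase wb)
      (d4 : Disjoint (X.erase z) ((Y.erase w ∪ Z.erase wb).erase zb))
      (hz₂ : rn x x' z ∈ X₂) (hzb₂ : rn x x' zb ∈ Y₂) (hw₂ : rn x x' w ∈ Y₂)
      (hwb₂ : rn x x' wb ∈ Z₂)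
      (d1₂ : Disjoint (X₂.erase (rn x x' z)) (Y₂.erase (rn x x' zb)))
      (hwU₂ : rn x x' w ∈ X₂.erase (rn x x' z) ∪ Y₂.erase (rn x x' zb))
      (d2₂ : Disjoint ((X₂.erase (rn x x' z) ∪ Y₂.erase (rn x x' zb)).erase (rn x x' w))
        (Z₂.erase (rn x x' wb)))
      (d3₂ : Disjoint (Y₂.erase (rn x x' w)) (Z₂.erase (rn x x' wb)))
      (hzbU₂ : rn x x' zb ∈ Y₂.erase (rn x x' w) ∪ Z₂.erase (rn x x' wb))
      (d4₂ : Disjoint (X₂.erase (rn x x' z))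
        ((Y₂.erase (rn x x' w) ∪ Z₂.erase (rn x x' wb)).erase (rn x x' zb))) :
      Ren C x x' f f' → Ren C x x' g g' → Ren C x x' h h' →
      RenA C x x' (AT.bet z zb w wb hz hzb hw hwb d1 hwU d2 d3 hzbU d4 f g h)
        (AT.bet (rn x x' z) (rn x x' zb) (rn x x' w) (rn x x' wb)
          hz₂ hzb₂ hw₂ hwb₂ d1₂ hwU₂ d2₂ d3₂ hzbU₂ d4₂ f' g' h')

section AuxLemmas

variable {V : Type} [DecidableEq V]

private lemma transport_heq (C : CECO V) {A B : Finset V} (e : A = B) (f : C.Ob A) :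
    HEq (e ▸ f : C.Ob B) f := by subst e; rfl

private lemma swap_symm_fix {x x' v : V} (h1 : v ≠ x) (h2 : v ≠ x') :
    ⇑(Equiv.swap x x').symm v = v := by
  rw [Equiv.symm_swap]; exact Equiv.swap_apply_of_ne_of_ne h1 h2

private lemma mem_image_symm {σ : V ≃ V} {X : Finset V} {v : V} :
    v ∈ X.image ⇑σ.symm ↔ σ v ∈ X := by
  rw [Finset.mem_image]
  constructor
  · rintro ⟨a, ha, rfl⟩; simpa using ha
  · intro h; exact ⟨σ v, h, Equiv.symm_apply_apply σ v⟩

private lemma image_fix {f : V → V} {s : Finset V} (h : ∀ v ∈ s, f v = v) :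
    s.image f = s :=
  (Finset.image_congr (fun v hv => h v hv)).trans Finset.image_id

private lemma rn_eq_swap {x x' z : V} (h : z ≠ x') :
    rn x x' z = ⇑(Equiv.swap x x').symm z := by
  unfold rn
  rw [Equiv.symm_swap]
  by_cases hz : z = x
  · subst hz; simp
  · simp [hz, Equiv.swap_apply_of_ne_of_ne hz h]

private lemma image_pc_index {f : V → V} (hf : Function.Injective f) (X Y : Finset V)
    (z w : V) :
    (X.erase z ∪ Y.erase w).image f = (X.image f).erase (f z) ∪ (Y.image f).erase (f w) := by
  rw [Finset.image_union, Finset.image_erase hf, Finset.image_erase hf]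

private lemma disj_image {f : V → V} (hf : Function.Injective f) {X Y : Finset V} {z w : V}
    (hd : Disjoint (X.erase z) (Y.erase w)) :
    Disjoint ((X.image f).erase (f z)) ((Y.image f).erase (f w)) := by
  rw [← Finset.image_erase hf, ← Finset.image_erase hf]
  exact (Finset.disjoint_image hf).mpr hd

private lemma vid_congr_heq (C : CECO V) {X X' : Finset V} (hX : X = X')
    {f : C.Ob X} {f' : C.Ob X'} (hf : HEq f f') : HEq (C.vid f) (C.vid f') := by
  subst hX; cases hf; rfl

private lemma vcomp_congr_heq (C : CECO V) {S T U S' T' U' : Finset V}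
    (hS : S = S') (hT : T = T') (hU : U = U')
    {f : C.Ob S} {g : C.Ob T} {h : C.Ob U} {f' : C.Ob S'} {g' : C.Ob T'} {h' : C.Ob U'}
    (hf : HEq f f') (hg : HEq g g') (hh : HEq h h')
    {φ : C.Hom g h} {ψ : C.Hom f g} {φ' : C.Hom g' h'} {ψ' : C.Hom f' g'}
    (hφ : HEq φ φ') (hψ : HEq ψ ψ') : HEq (C.vcomp φ ψ) (C.vcomp φ' ψ') := by
  subst hS hT hU; cases hf; cases hg; cases hh; cases hφ; cases hψ; rfl

private lemma pc_congr_heq (C : CECO V) {X X' Y Y' : Finset V} (hX : X = X') (hY : Y = Y')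
    {z z' w w' : V} (hz : z = z') (hw : w = w')
    {mz : z ∈ X} {mw : w ∈ Y} {d : Disjoint (X.erase z) (Y.erase w)}
    {mz' : z' ∈ X'} {mw' : w' ∈ Y'} {d' : Disjoint (X'.erase z') (Y'.erase w')}
    {f : C.Ob X} {f' : C.Ob X'} {g : C.Ob Y} {g' : C.Ob Y'}
    (hf : HEq f f') (hg : HEq g g') :
    HEq (C.pc z w mz mw d f g) (C.pc z' w' mz' mw' d' f' g') := by
  subst hX hY hz hw; cases hf; cases hg; rfl

private lemma gam_congr_heq (C : CECO V) {X X' Y Y' : Finset V} (hX : X = X') (hY : Y = Y')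
    {z z' w w' : V} (hz : z = z') (hw : w = w')
    {mz : z ∈ X} {mw : w ∈ Y} {d : Disjoint (X.erase z) (Y.erase w)}
    {mz' : z' ∈ X'} {mw' : w' ∈ Y'} {d' : Disjoint (X'.erase z') (Y'.erase w')}
    {f : C.Ob X} {f' : C.Ob X'} {g : C.Ob Y} {g' : C.Ob Y'}
    (hf : HEq f f') (hg : HEq g g') :
    HEq (C.gam z w mz mw d f g) (C.gam z' w' mz' mw' d' f' g') := by
  subst hX hY hz hw; cases hf; cases hg; rfl

private lemma pcH_congr_heq (C : CECO V) {X Xb Y Yb X' Xb' Y' Yb' : Finset V}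
    (hX : X = X') (hXb : Xb = Xb') (hY : Y = Y') (hYb : Yb = Yb')
    {z z' w w' : V} (hz : z = z') (hw : w = w')
    {mz : z ∈ X} {mzb : z ∈ Xb} {mw : w ∈ Y} {mwb : w ∈ Yb}
    {d : Disjoint (X.erase z) (Y.erase w)} {db : Disjoint (Xb.erase z) (Yb.erase w)}
    {mz' : z' ∈ X'} {mzb' : z' ∈ Xb'} {mw' : w' ∈ Y'} {mwb' : w' ∈ Yb'}
    {d' : Disjoint (X'.erase z') (Y'.erase w')}
    {db' : Disjoint (Xb'.erase z') (Yb'.erase w')}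
    {f : C.Ob X} {fb : C.Ob Xb} {g : C.Ob Y} {gb : C.Ob Yb}
    {f' : C.Ob X'} {fb' : C.Ob Xb'} {g' : C.Ob Y'} {gb' : C.Ob Yb'}
    (hf : HEq f f') (hfb : HEq fb fb') (hg : HEq g g') (hgb : HEq gb gb')
    {φ : C.Hom f fb} {ψ : C.Hom g gb} {φ' : C.Hom f' fb'} {ψ' : C.Hom g' gb'}
    (hφ : HEq φ φ') (hψ : HEq ψ ψ') :
    HEq (C.pcH z w mz mzb mw mwb d db φ ψ) (C.pcH z' w' mz' mzb' mw' mwb' d' db' φ' ψ') := by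
  subst hX hXb hY hYb hz hw
  cases hf; cases hfb; cases hg; cases hgb; cases hφ; cases hψ; rfl

private lemma bet_congr_heq (C : CECO V) {X Y Z X' Y' Z' : Finset V}
    (hX : X = X') (hY : Y = Y') (hZ : Z = Z')
    {x xb y yb x' xb' y' yb' : V}
    (hx : x = x') (hxb : xb = xb') (hy : y = y') (hyb : yb = yb')
    {m1 : x ∈ X} {m2 : xb ∈ Y} {m3 : y ∈ Y} {m4 : yb ∈ Z}
    {d1 : Disjoint (X.erase x) (Y.erase xb)}
    {hyU : y ∈ X.erase x ∪ Y.erase xb}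
    {d2 : Disjoint ((X.erase x ∪ Y.erase xb).erase y) (Z.erase yb)}
    {d3 : Disjoint (Y.erase y) (Z.erase yb)}
    {hxbU : xb ∈ Y.erase y ∪ Z.erase yb}
    {d4 : Disjoint (X.erase x) ((Y.erase y ∪ Z.erase yb).erase xb)}
    {m1' : x' ∈ X'} {m2' : xb' ∈ Y'} {m3' : y' ∈ Y'} {m4' : yb' ∈ Z'}
    {d1' : Disjoint (X'.erase x') (Y'.erase xb')}
    {hyU' : y' ∈ X'.erase x' ∪ Y'.erase xb'}
    {d2' : Disjoint ((X'.erase x' ∪ Y'.erase xb').erase y') (Z'.erase yb')}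
    {d3' : Disjoint (Y'.erase y') (Z'.erase yb')}
    {hxbU' : xb' ∈ Y'.erase y' ∪ Z'.erase yb'}
    {d4' : Disjoint (X'.erase x') ((Y'.erase y' ∪ Z'.erase yb').erase xb')}
    {f : C.Ob X} {g : C.Ob Y} {h : C.Ob Z}
    {f' : C.Ob X'} {g' : C.Ob Y'} {h' : C.Ob Z'}
    (hf : HEq f f') (hg : HEq g g') (hh : HEq h h') :
    HEq (C.bet x xb y yb m1 m2 m3 m4 d1 hyU d2 d3 hxbU d4 f g h)
        (C.bet x' xb' y' yb' m1' m2' m3' m4' d1' hyU' d2' d3' hxbU' d4' f' g' h') := by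
  subst hX hY hZ hx hxb hy hyb
  cases hf; cases hg; cases hh; rfl

private lemma act_one_heq (C : CECOE V) {X : Finset V} (f : C.Ob X) :
    HEq (C.act 1 f) f := by
  have e : X.image ⇑(1 : V ≃ V).symm = X := image_fix (fun _ _ => rfl)
  exact (transport_heq C.toCECO e (C.act 1 f)).symm.trans (heq_of_eq (C.act_one e f))

private lemma act_pc_heq (C : CECOE V) {X Y : Finset V} (z w : V) (hz : z ∈ X) (hw : w ∈ Y)
    (hd : Disjoint (X.erase z) (Y.erase w)) (σ σ₁ σ₂ : V ≃ V)
    (h₁ : ∀ v ∈ X.erase z, σ₁.symm v = σ.symm v)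
    (h₂ : ∀ v ∈ Y.erase w, σ₂.symm v = σ.symm v)
    (hz' : σ₁.symm z ∈ X.image ⇑σ₁.symm) (hw' : σ₂.symm w ∈ Y.image ⇑σ₂.symm)
    (hd' : Disjoint ((X.image ⇑σ₁.symm).erase (σ₁.symm z))
      ((Y.image ⇑σ₂.symm).erase (σ₂.symm w)))
    (e : (X.erase z ∪ Y.erase w).image ⇑σ.symm
        = (X.image ⇑σ₁.symm).erase (σ₁.symm z) ∪ (Y.image ⇑σ₂.symm).erase (σ₂.symm w))
    (f : C.Ob X) (g : C.Ob Y) :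
    HEq (C.act σ (C.pc z w hz hw hd f g))
      (C.pc (σ₁.symm z) (σ₂.symm w) hz' hw' hd' (C.act σ₁ f) (C.act σ₂ g)) :=
  (transport_heq C.toCECO e _).symm.trans
    (heq_of_eq (C.act_pc z w hz hw hd σ σ₁ σ₂ h₁ h₂ hz' hw' hd' e f g))

end AuxLemmas

private lemma mainO (C : CECOE V) (x x' : V) {X X' : Finset V} {W : OT C X} {W' : OT C X'}
    (h : Ren C x x' W W') :
    x ∈ X ∧ x' ∉ X ∧ X' = X.image ⇑(Equiv.swap x x').symm ∧
      HEq (interpO C W') (C.act (Equiv.swap x x') (interpO C W)) := by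
  induction h with
  | par a hx hx' e =>
    exact ⟨hx, hx', e.symm, transport_heq C.toCECO e _⟩
  | @pcL A A' B W₁ W₁' W₂ z w hz hz' hw hd hd' hr ih =>
    obtain ⟨hxX, hx'X, hX', hH⟩ := ih
    subst hX'
    have hinj : Function.Injective ⇑(Equiv.swap x x').symm := (Equiv.swap x x').symm.injective
    have hzx : z ≠ x := by
      intro hzz
      have hmem := mem_image_symm.mp hz'
      rw [hzz, Equiv.swap_apply_left] at hmem
      exact hx'X hmem
    have hzx' : z ≠ x' := fun hzz => hx'X (hzz ▸ hz)
    have hszz : ⇑(Equiv.swap x x').symm z = z := swap_symm_fix hzx hzx'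
    have hx'A : x' ∈ A.image ⇑(Equiv.swap x x').symm :=
      mem_image_symm.mpr (by rwa [Equiv.swap_apply_right])
    have hxez : x ∈ A.erase z := Finset.mem_erase.mpr ⟨hzx.symm, hxX⟩
    have hx'ez : x' ∈ (A.image ⇑(Equiv.swap x x').symm).erase z :=
      Finset.mem_erase.mpr ⟨hzx'.symm, hx'A⟩
    have hxnY : x ∉ B.erase w := Finset.disjoint_left.mp hd hxez
    have hx'nY : x' ∉ B.erase w := Finset.disjoint_left.mp hd' hx'ez
    have hfixY : ∀ v ∈ B.erase w, ⇑(Equiv.swap x x').symm v = v := fun v hv =>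
      swap_symm_fix (fun hc => hxnY (hc ▸ hv)) (fun hc => hx'nY (hc ▸ hv))
    have hYfix : (B.erase w).image ⇑(Equiv.swap x x').symm = B.erase w := image_fix hfixY
    have hB1 : B.image ⇑(1 : V ≃ V).symm = B := image_fix (fun _ _ => rfl)
    refine ⟨Finset.mem_union_left _ hxez, ?_, ?_, ?_⟩
    · intro hm
      rcases Finset.mem_union.mp hm with h1 | h1
      · exact hx'X (Finset.mem_of_mem_erase h1)
      · exact hx'nY h1
    · rw [Finset.image_union, Finset.image_erase hinj, hszz, hYfix]
    · have e : (A.erase z ∪ B.erase w).image ⇑(Equiv.swap x x').symm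
          = (A.image ⇑(Equiv.swap x x').symm).erase (⇑(Equiv.swap x x').symm z)
            ∪ (B.image ⇑(1 : V ≃ V).symm).erase ((1 : V ≃ V).symm w) := by
        rw [Finset.image_union, Finset.image_erase hinj, hB1, hYfix]
        rfl
      have d : Disjoint
          ((A.image ⇑(Equiv.swap x x').symm).erase (⇑(Equiv.swap x x').symm z))
          ((B.image ⇑(1 : V ≃ V).symm).erase ((1 : V ≃ V).symm w)) := by
        rw [hszz, hB1]; exact hd'
      exact (pc_congr_heq C.toCECO rfl hB1.symm hszz.symm rfl hH
          (act_one_heq C (interpO C W₂)).symm).trans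
        (act_pc_heq C z w hz hw hd (Equiv.swap x x') (Equiv.swap x x') 1
          (fun _ _ => rfl) (fun v hv => (hfixY v hv).symm)
          (Finset.mem_image_of_mem _ hz) (Finset.mem_image_of_mem _ hw) d e
          (interpO C W₁) (interpO C W₂)).symm
  | @pcR A B B' W₁ W₂ W₂' z w hz hw hw' hd hd' hr ih =>
    obtain ⟨hxX, hx'X, hX', hH⟩ := ih
    subst hX'
    have hinj : Function.Injective ⇑(Equiv.swap x x').symm := (Equiv.swap x x').symm.injective
    have hwx : w ≠ x := by
      intro hww
      have hmem := mem_image_symm.mp hw'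
      rw [hww, Equiv.swap_apply_left] at hmem
      exact hx'X hmem
    have hwx' : w ≠ x' := fun hww => hx'X (hww ▸ hw)
    have hsww : ⇑(Equiv.swap x x').symm w = w := swap_symm_fix hwx hwx'
    have hx'B : x' ∈ B.image ⇑(Equiv.swap x x').symm :=
      mem_image_symm.mpr (by rwa [Equiv.swap_apply_right])
    have hxew : x ∈ B.erase w := Finset.mem_erase.mpr ⟨hwx.symm, hxX⟩
    have hx'ew : x' ∈ (B.image ⇑(Equiv.swap x x').symm).erase w :=
      Finset.mem_erase.mpr ⟨hwx'.symm, hx'B⟩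
    have hxnA : x ∉ A.erase z := Finset.disjoint_right.mp hd hxew
    have hx'nA : x' ∉ A.erase z := Finset.disjoint_right.mp hd' hx'ew
    have hfixA : ∀ v ∈ A.erase z, ⇑(Equiv.swap x x').symm v = v := fun v hv =>
      swap_symm_fix (fun hc => hxnA (hc ▸ hv)) (fun hc => hx'nA (hc ▸ hv))
    have hAfix : (A.erase z).image ⇑(Equiv.swap x x').symm = A.erase z := image_fix hfixA
    have hA1 : A.image ⇑(1 : V ≃ V).symm = A := image_fix (fun _ _ => rfl)
    refine ⟨Finset.mem_union_right _ hxew, ?_, ?_, ?_⟩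
    · intro hm
      rcases Finset.mem_union.mp hm with h1 | h1
      · exact hx'nA h1
      · exact hx'X (Finset.mem_of_mem_erase h1)
    · rw [Finset.image_union, hAfix, Finset.image_erase hinj, hsww]
    · have e : (A.erase z ∪ B.erase w).image ⇑(Equiv.swap x x').symm
          = (A.image ⇑(1 : V ≃ V).symm).erase ((1 : V ≃ V).symm z)
            ∪ (B.image ⇑(Equiv.swap x x').symm).erase (⇑(Equiv.swap x x').symm w) := by
        rw [Finset.image_union, hAfix, Finset.image_erase hinj, hA1]
        rfl
      have d : Disjoint ((A.image ⇑(1 : V ≃ V).symm).erase ((1 : V ≃ V).symm z))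
          ((B.image ⇑(Equiv.swap x x').symm).erase (⇑(Equiv.swap x x').symm w)) := by
        rw [hsww, hA1]; exact hd'
      exact (pc_congr_heq C.toCECO hA1.symm rfl rfl hsww.symm
          (act_one_heq C (interpO C W₁)).symm hH).trans
        (act_pc_heq C z w hz hw hd (Equiv.swap x x') 1 (Equiv.swap x x')
          (fun v hv => (hfixA v hv).symm) (fun _ _ => rfl)
          (Finset.mem_image_of_mem _ hz) (Finset.mem_image_of_mem _ hw) d e
          (interpO C W₁) (interpO C W₂)).symm

private lemma mainA (C : CECOE V) (x x' : V)
    {X₁ X₂ X₃ X₄ : Finset V} {U : OT C X₁} {W : OT C X₂} {U' : OT C X₃} {W' : OT C X₄}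
    {φ : AT C U W} {φ' : AT C U' W'} (h : RenA C x x' φ φ') :
    x' ∉ X₁ ∧ x' ∉ X₂ ∧ X₃ = X₁.image ⇑(Equiv.swap x x').symm ∧
    X₄ = X₂.image ⇑(Equiv.swap x x').symm ∧
    HEq (interpO C U') (C.act (Equiv.swap x x') (interpO C U)) ∧
    HEq (interpO C W') (C.act (Equiv.swap x x') (interpO C W)) ∧
    HEq (interpA C φ') (C.actH (Equiv.swap x x') (interpA C φ)) := by
  induction h with
  | id hr =>
    obtain ⟨hx, hx', hXeq, hH⟩ := mainO C x x' hr
    refine ⟨hx', hx', hXeq, hXeq, hH, hH, ?_⟩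
    show HEq (C.vid (interpO C _)) (C.actH (Equiv.swap x x') (C.vid (interpO C _)))
    rw [C.actH_vid]
    exact vid_congr_heq C.toCECO hXeq hH
  | comp h2 h1 ih2 ih1 =>
    obtain ⟨hb1, hc1, hXe, hXf, hVm2, hW2, hm2⟩ := ih2
    obtain ⟨ha1, hb1', hXd, hXe', hU2, hVm2', hm1⟩ := ih1
    refine ⟨ha1, hc1, hXd, hXf, hU2, hW2, ?_⟩
    show HEq (C.vcomp (interpA C _) (interpA C _))
      (C.actH (Equiv.swap x x') (C.vcomp (interpA C _) (interpA C _)))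
    rw [C.actH_vcomp]
    exact vcomp_congr_heq C.toCECO hXd hXe' hXf hU2 hVm2' hW2 hm2 hm1
  | @pcH X X' Y Y' X₂ X₂' Y₂ Y₂' z w f f' g g' f₂ f₂' g₂ g₂' hz hz' hw hw' hd hd'
      hz₂ hz₂' hw₂ hw₂' hd₂ hd₂' φ₀ φ₀' ψ₀ ψ₀' rφ rψ ihφ ihψ =>
    obtain ⟨hxf, hxf', hX2, hX2', hof, hof', hmφ⟩ := ihφ
    obtain ⟨hxg, hxg', hY2, hY2', hog, hog', hmψ⟩ := ihψ
    have hinj : Function.Injective ⇑(Equiv.swap x x').symm := (Equiv.swap x x').symm.injective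
    have hrz : rn x x' z = ⇑(Equiv.swap x x').symm z := rn_eq_swap (fun hc => hxf (hc ▸ hz))
    have hrw : rn x x' w = ⇑(Equiv.swap x x').symm w := rn_eq_swap (fun hc => hxg (hc ▸ hw))
    subst hX2 hX2' hY2 hY2'
    refine ⟨?_, ?_, ?_, ?_, ?_, ?_, ?_⟩
    · intro hm
      rcases Finset.mem_union.mp hm with h1 | h1
      · exact hxf (Finset.mem_of_mem_erase h1)
      · exact hxg (Finset.mem_of_mem_erase h1)
    · intro hm
      rcases Finset.mem_union.mp hm with h1 | h1
      · exact hxf' (Finset.mem_of_mem_erase h1)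
      · exact hxg' (Finset.mem_of_mem_erase h1)
    · rw [hrz, hrw, image_pc_index hinj]
    · rw [hrz, hrw, image_pc_index hinj]
    · exact (pc_congr_heq C.toCECO rfl rfl hrz hrw hof hog).trans
        (act_pc_heq C z w hz hw hd (Equiv.swap x x') (Equiv.swap x x') (Equiv.swap x x')
          (fun _ _ => rfl) (fun _ _ => rfl)
          (Finset.mem_image_of_mem _ hz) (Finset.mem_image_of_mem _ hw)
          (disj_image hinj hd) (image_pc_index hinj X Y z w)
          (interpO C f) (interpO C g)).symm
    · exact (pc_congr_heq C.toCECO rfl rfl hrz hrw hof' hog').trans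
        (act_pc_heq C z w hz' hw' hd' (Equiv.swap x x') (Equiv.swap x x') (Equiv.swap x x')
          (fun _ _ => rfl) (fun _ _ => rfl)
          (Finset.mem_image_of_mem _ hz') (Finset.mem_image_of_mem _ hw')
          (disj_image hinj hd') (image_pc_index hinj X' Y' z w)
          (interpO C f') (interpO C g')).symm
    · exact (pcH_congr_heq C.toCECO rfl rfl rfl rfl hrz hrw hof hof' hog hog' hmφ hmψ).trans
        (C.act_pcH z w hz hz' hw hw' hd hd'
          (Equiv.swap x x') (Equiv.swap x x') (Equiv.swap x x')
          (fun _ _ => rfl) (fun _ _ => rfl)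
          (Finset.mem_image_of_mem _ hz) (Finset.mem_image_of_mem _ hz')
          (Finset.mem_image_of_mem _ hw) (Finset.mem_image_of_mem _ hw')
          (disj_image hinj hd) (disj_image hinj hd')
          (interpA C φ₀) (interpA C ψ₀)).symm
  | @gam X Y X₂ Y₂ z w f g f' g' hz hw hd hz₂ hw₂ hd₂ rf rg =>
    obtain ⟨hxf0, hxf, hX2, hof⟩ := mainO C x x' rf
    obtain ⟨hxg0, hxg, hY2, hog⟩ := mainO C x x' rg
    have hinj : Function.Injective ⇑(Equiv.swap x x').symm := (Equiv.swap x x').symm.injective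
    have hrz : rn x x' z = ⇑(Equiv.swap x x').symm z := rn_eq_swap (fun hc => hxf (hc ▸ hz))
    have hrw : rn x x' w = ⇑(Equiv.swap x x').symm w := rn_eq_swap (fun hc => hxg (hc ▸ hw))
    subst hX2 hY2
    refine ⟨?_, ?_, ?_, ?_, ?_, ?_, ?_⟩
    · intro hm
      rcases Finset.mem_union.mp hm with h1 | h1
      · exact hxf (Finset.mem_of_mem_erase h1)
      · exact hxg (Finset.mem_of_mem_erase h1)
    · intro hm
      rcases Finset.mem_union.mp hm with h1 | h1
      · exact hxg (Finset.mem_of_mem_erase h1)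
      · exact hxf (Finset.mem_of_mem_erase h1)
    · rw [hrz, hrw, image_pc_index hinj]
    · rw [hrz, hrw, image_pc_index hinj]
    · exact (pc_congr_heq C.toCECO rfl rfl hrz hrw hof hog).trans
        (act_pc_heq C z w hz hw hd (Equiv.swap x x') (Equiv.swap x x') (Equiv.swap x x')
          (fun _ _ => rfl) (fun _ _ => rfl)
          (Finset.mem_image_of_mem _ hz) (Finset.mem_image_of_mem _ hw)
          (disj_image hinj hd) (image_pc_index hinj X Y z w)
          (interpO C f) (interpO C g)).symm
    · exact (pc_congr_heq C.toCECO rfl rfl hrw hrz hog hof).trans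
        (act_pc_heq C w z hw hz hd.symm (Equiv.swap x x') (Equiv.swap x x') (Equiv.swap x x')
          (fun _ _ => rfl) (fun _ _ => rfl)
          (Finset.mem_image_of_mem _ hw) (Finset.mem_image_of_mem _ hz)
          (disj_image hinj hd.symm) (image_pc_index hinj Y X w z)
          (interpO C g) (interpO C f)).symm
    · exact (gam_congr_heq C.toCECO rfl rfl hrz hrw hof hog).trans
        (C.act_gam z w hz hw hd (Equiv.swap x x') (Equiv.swap x x') (Equiv.swap x x')
          (fun _ _ => rfl) (fun _ _ => rfl)
          (Finset.mem_image_of_mem _ hz) (Finset.mem_image_of_mem _ hw)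
          (disj_image hinj hd) (interpO C f) (interpO C g)).symm
  | @bet X Y Z X₂ Y₂ Z₂ z zb w wb f g h f' g' h' hz hzb hw hwb d1 hwU d2 d3 hzbU d4
      hz₂ hzb₂ hw₂ hwb₂ d1₂ hwU₂ d2₂ d3₂ hzbU₂ d4₂ rf rg rh =>
    obtain ⟨hxf0, hxf, hX2, hof⟩ := mainO C x x' rf
    obtain ⟨hxg0, hxg, hY2, hog⟩ := mainO C x x' rg
    obtain ⟨hxh0, hxh, hZ2, hoh⟩ := mainO C x x' rh
    have hinj : Function.Injective ⇑(Equiv.swap x x').symm := (Equiv.swap x x').symm.injective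
    have hrz : rn x x' z = ⇑(Equiv.swap x x').symm z := rn_eq_swap (fun hc => hxf (hc ▸ hz))
    have hrzb : rn x x' zb = ⇑(Equiv.swap x x').symm zb :=
      rn_eq_swap (fun hc => hxg (hc ▸ hzb))
    have hrw : rn x x' w = ⇑(Equiv.swap x x').symm w := rn_eq_swap (fun hc => hxg (hc ▸ hw))
    have hrwb : rn x x' wb = ⇑(Equiv.swap x x').symm wb :=
      rn_eq_swap (fun hc => hxh (hc ▸ hwb))
    subst hX2 hY2 hZ2
    have eXY : (X.image ⇑(Equiv.swap x x').symm).erase (rn x x' z)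
          ∪ (Y.image ⇑(Equiv.swap x x').symm).erase (rn x x' zb)
        = (X.erase z ∪ Y.erase zb).image ⇑(Equiv.swap x x').symm := by
      rw [hrz, hrzb, image_pc_index hinj]
    have eYZ : (Y.image ⇑(Equiv.swap x x').symm).erase (rn x x' w)
          ∪ (Z.image ⇑(Equiv.swap x x').symm).erase (rn x x' wb)
        = (Y.erase w ∪ Z.erase wb).image ⇑(Equiv.swap x x').symm := by
      rw [hrw, hrwb, image_pc_index hinj]
    have inner1 : HEq (C.pc (rn x x' z) (rn x x' zb) hz₂ hzb₂ d1₂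
          (interpO C f') (interpO C g'))
        (C.act (Equiv.swap x x') (C.pc z zb hz hzb d1 (interpO C f) (interpO C g))) :=
      (pc_congr_heq C.toCECO rfl rfl hrz hrzb hof hog).trans
        (act_pc_heq C z zb hz hzb d1 (Equiv.swap x x') (Equiv.swap x x') (Equiv.swap x x')
          (fun _ _ => rfl) (fun _ _ => rfl)
          (Finset.mem_image_of_mem _ hz) (Finset.mem_image_of_mem _ hzb)
          (disj_image hinj d1) (image_pc_index hinj X Y z zb)
          (interpO C f) (interpO C g)).symm
    have inner2 : HEq (C.pc (rn x x' w) (rn x x' wb) hw₂ hwb₂ d3₂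
          (interpO C g') (interpO C h'))
        (C.act (Equiv.swap x x') (C.pc w wb hw hwb d3 (interpO C g) (interpO C h))) :=
      (pc_congr_heq C.toCECO rfl rfl hrw hrwb hog hoh).trans
        (act_pc_heq C w wb hw hwb d3 (Equiv.swap x x') (Equiv.swap x x') (Equiv.swap x x')
          (fun _ _ => rfl) (fun _ _ => rfl)
          (Finset.mem_image_of_mem _ hw) (Finset.mem_image_of_mem _ hwb)
          (disj_image hinj d3) (image_pc_index hinj Y Z w wb)
          (interpO C g) (interpO C h)).symm
    refine ⟨?_, ?_, ?_, ?_, ?_, ?_, ?_⟩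
    · intro hm
      rcases Finset.mem_union.mp hm with h1 | h1
      · rcases Finset.mem_union.mp (Finset.mem_of_mem_erase h1) with h2 | h2
        · exact hxf (Finset.mem_of_mem_erase h2)
        · exact hxg (Finset.mem_of_mem_erase h2)
      · exact hxh (Finset.mem_of_mem_erase h1)
    · intro hm
      rcases Finset.mem_union.mp hm with h1 | h1
      · exact hxf (Finset.mem_of_mem_erase h1)
      · rcases Finset.mem_union.mp (Finset.mem_of_mem_erase h1) with h2 | h2
        · exact hxg (Finset.mem_of_mem_erase h2)
        · exact hxh (Finset.mem_of_mem_erase h2)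
    · simp only [hrz, hrzb, hrw, hrwb, Finset.image_union, Finset.image_erase hinj]
    · simp only [hrz, hrzb, hrw, hrwb, Finset.image_union, Finset.image_erase hinj]
    · exact (pc_congr_heq C.toCECO eXY rfl hrw hrwb inner1 hoh).trans
        (act_pc_heq C w wb hwU hwb d2 (Equiv.swap x x') (Equiv.swap x x') (Equiv.swap x x')
          (fun _ _ => rfl) (fun _ _ => rfl)
          (Finset.mem_image_of_mem _ hwU) (Finset.mem_image_of_mem _ hwb)
          (disj_image hinj d2) (image_pc_index hinj _ Z w wb)
          (C.pc z zb hz hzb d1 (interpO C f) (interpO C g)) (interpO C h)).symm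
    · exact (pc_congr_heq C.toCECO rfl eYZ hrz hrzb hof inner2).trans
        (act_pc_heq C z zb hz hzbU d4 (Equiv.swap x x') (Equiv.swap x x') (Equiv.swap x x')
          (fun _ _ => rfl) (fun _ _ => rfl)
          (Finset.mem_image_of_mem _ hz) (Finset.mem_image_of_mem _ hzbU)
          (disj_image hinj d4) (image_pc_index hinj X _ z zb)
          (interpO C f) (C.pc w wb hw hwb d3 (interpO C g) (interpO C h))).symm
    · refine (bet_congr_heq C.toCECO rfl rfl rfl hrz hrzb hrw hrwb hof hog hoh).trans
        (C.act_bet z zb w wb hz hzb hw hwb d1 hwU d2 d3 hzbU d4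
          (Equiv.swap x x') (Equiv.swap x x') (Equiv.swap x x') (Equiv.swap x x')
          (fun _ _ => rfl) (fun _ _ => rfl) (fun _ _ => rfl)
          (Finset.mem_image_of_mem _ hz) (Finset.mem_image_of_mem _ hzb)
          (Finset.mem_image_of_mem _ hw) (Finset.mem_image_of_mem _ hwb)
          (disj_image hinj d1) ?_ ?_ (disj_image hinj d3) ?_ ?_
          (interpO C f) (interpO C g) (interpO C h)).symm
      · rw [← image_pc_index hinj]
        exact Finset.mem_image_of_mem _ hwU
      · have hD := disj_image hinj d2
        rwa [image_pc_index hinj] at hD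
      · have hM := Finset.mem_image_of_mem ⇑(Equiv.swap x x').symm hzbU
        rwa [image_pc_index hinj] at hM
      · have hD := disj_image hinj d4
        rwa [image_pc_index hinj] at hD

/-- **Lemma 2.13 of the paper**: substitution of a renamed parameter corresponds to the
bijection action on the interpretation: if `W` is an object term of type `X` of the
σ-free syntax, `x ∈ X`, `a` a parameter of `W` with `x ∈ FV(a)`, and `τ` renames `x` to
a fresh `x'`, then `[W[a^τ/a]] = [W]^σ`, where `σ` renames `x` to `x'` in `X`; and for
any arrow term `φ` with source `W`, `[φ[a^τ/a]] = [φ]^σ`. -/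
theorem interp_of_substitution (C : CECOE V) (x x' : V) :
    (∀ {X X' : Finset V} (W : OT C X) (W' : OT C X'), Ren C x x' W W' →
      ∀ e : X.image ⇑(Equiv.swap x x').symm = X',
        interpO C W' = e ▸ C.act (Equiv.swap x x') (interpO C W)) ∧
    (∀ {X₁ X₂ X₃ X₄ : Finset V} {U : OT C X₁} {W : OT C X₂} {U' : OT C X₃}
      {W' : OT C X₄} (φ : AT C U W) (φ' : AT C U' W'), RenA C x x' φ φ' →
        HEq (interpA C φ') (C.actH (Equiv.swap x x') (interpA C φ))) := by
  constructor
  · intro X X' W W' h e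
    obtain ⟨-, -, hXeq, hH⟩ := mainO C x x' h
    subst e
    exact eq_of_heq hH
  · intro X₁ X₂ X₃ X₄ U W U' W' φ φ' h
    exact (mainA C x x' h).2.2.2.2.2.2

end CatCyclicOperad
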